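/- Let r ≥ 2 be an even integer, let k ≥ r be an integer and p ≥ r be a real number. If G_w is a weighted k-partite r-graph (with at least one edge of nonzero weight), then λ^(p)(G_w) · λ_min^(p)(K_k^r) ≥ k^{1−r/p} · (k−1)(k−2)⋯(k−r+1) · λ_min^(p)(G_w). -/

import Mathlib

open Finset

/-- Polynomial form of a weighted `r`-graph with edge set `E` and weights `w`:
`P(x) = r! * ∑_{e ∈ E} w(e) * ∏_{i ∈ e} x i`. -/
noncomputable def polyForm (r : ℕ) {V : Type*} (E : Finset (Finset V))
    (w : Finset V → ℝ) (x : V → ℝ) : ℝ :=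
  (r.factorial : ℝ) * ∑ e ∈ E, w e * ∏ i ∈ e, x i

/-- The ℓ^p norm of a vector. -/
noncomputable def lpNorm (p : ℝ) {V : Type*} [Fintype V] (x : V → ℝ) : ℝ :=
  (∑ i, |x i| ^ p) ^ (1 / p)

/-- `λ^(p)(G_w)`: the maximum of the polynomial form over the unit ℓ^p sphere. -/
noncomputable def lamMax (r : ℕ) (p : ℝ) {V : Type*} [Fintype V]
    (E : Finset (Finset V)) (w : Finset V → ℝ) : ℝ :=
  sSup {t | ∃ x : V → ℝ, lpNorm p x = 1 ∧ polyForm r E w x = t}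

/-- `λ_min^(p)(G_w)`: the minimum of the polynomial form over the unit ℓ^p sphere. -/
noncomputable def lamMin (r : ℕ) (p : ℝ) {V : Type*} [Fintype V]
    (E : Finset (Finset V)) (w : Finset V → ℝ) : ℝ :=
  sInf {t | ∃ x : V → ℝ, lpNorm p x = 1 ∧ polyForm r E w x = t}

/-- Edge set of the complete `r`-graph `K_k^r` on vertex set `Fin k`. -/
def completeEdges (r k : ℕ) : Finset (Finset (Fin k)) :=
  Finset.univ.powersetCard r

section Aux
variable {V : Type*} [Fintype V] {p : ℝ}

lemma sum_abs_rpow_nonneg (p : ℝ) (x : V → ℝ) : 0 ≤ ∑ i, |x i| ^ p :=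
  sum_nonneg fun i _ => Real.rpow_nonneg (abs_nonneg _) _

lemma lpNorm_nonneg (p : ℝ) (x : V → ℝ) : 0 ≤ lpNorm p x :=
  Real.rpow_nonneg (sum_abs_rpow_nonneg p x) _

lemma lpNorm_rpow (hp : 0 < p) (x : V → ℝ) : lpNorm p x ^ p = ∑ i, |x i| ^ p := by
  rw [lpNorm, ← Real.rpow_mul (sum_abs_rpow_nonneg p x), one_div,
    inv_mul_cancel₀ hp.ne', Real.rpow_one]

lemma lpNorm_smul (hp : 0 < p) {c : ℝ} (hc : 0 ≤ c) (x : V → ℝ) :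
    lpNorm p (fun i => c * x i) = c * lpNorm p x := by
  unfold lpNorm
  have h : ∀ i, |c * x i| ^ p = c ^ p * |x i| ^ p := fun i => by
    rw [abs_mul, abs_of_nonneg hc, Real.mul_rpow hc (abs_nonneg _)]
  simp_rw [h, ← Finset.mul_sum]
  rw [Real.mul_rpow (Real.rpow_nonneg hc p) (sum_abs_rpow_nonneg p x),
    ← Real.rpow_mul hc, mul_one_div, div_self hp.ne', Real.rpow_one]

lemma lpNorm_eq_zero (hp : 0 < p) {x : V → ℝ} (h : lpNorm p x = 0) : ∀ i, x i = 0 := by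
  have hs : ∑ i, |x i| ^ p = 0 := by
    have := lpNorm_rpow hp x
    rw [h, Real.zero_rpow hp.ne'] at this
    exact this.symm
  intro i
  have h0 : ∀ j ∈ (univ : Finset V), (0:ℝ) ≤ |x j| ^ p :=
    fun j _ => Real.rpow_nonneg (abs_nonneg _) _
  have := (Finset.sum_eq_zero_iff_of_nonneg h0).1 hs i (mem_univ i)
  have : |x i| = 0 := by
    by_contra hne
    have : 0 < |x i| := lt_of_le_of_ne (abs_nonneg _) (Ne.symm hne)
    exact absurd ‹|x i| ^ p = 0› (ne_of_gt (Real.rpow_pos_of_pos this p))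
  exact abs_eq_zero.1 this

lemma polyForm_smul (r : ℕ) (E : Finset (Finset V)) (w : Finset V → ℝ)
    (hunif : ∀ e ∈ E, e.card = r) (c : ℝ) (x : V → ℝ) :
    polyForm r E w (fun i => c * x i) = c ^ r * polyForm r E w x := by
  unfold polyForm
  have h : ∀ e ∈ E, w e * ∏ i ∈ e, (c * x i) = c ^ r * (w e * ∏ i ∈ e, x i) := by
    intro e he
    rw [Finset.prod_mul_distrib, Finset.prod_const, hunif e he]; ring
  rw [Finset.sum_congr rfl h, ← Finset.mul_sum]; ring

end Aux

-- For any two finsets of the same cardinality in a fintype, there is a permutation mapping one onto the other.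
lemma exists_perm_image {α : Type*} [Fintype α] [DecidableEq α] {S T : Finset α}
    (h : S.card = T.card) : ∃ τ : Equiv.Perm α, S.image τ = T := by
  classical
  have hc : Sᶜ.card = Tᶜ.card := by
    rw [Finset.card_compl, Finset.card_compl, h]
  let e₁ : {x // x ∈ S} ≃ {x // x ∈ T} := Finset.equivOfCardEq h
  let e₂' : {x // x ∈ Sᶜ} ≃ {x // x ∈ Tᶜ} := Finset.equivOfCardEq hc
  let e₂ : {x // ¬ x ∈ S} ≃ {x // ¬ x ∈ T} :=
    ((Equiv.subtypeEquivRight (fun x => (Finset.mem_compl (s := S)).symm)).trans e₂').trans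
      (Equiv.subtypeEquivRight (fun x => Finset.mem_compl (s := T)))
  refine ⟨Equiv.subtypeCongr e₁ e₂, ?_⟩
  apply Finset.eq_of_subset_of_card_le
  · intro y hy
    obtain ⟨x, hx, rfl⟩ := Finset.mem_image.1 hy
    have : Equiv.subtypeCongr e₁ e₂ x = (e₁ ⟨x, hx⟩ : α) := by
      simp [Equiv.subtypeCongr, Equiv.sumCompl_symm_apply_of_pos hx]
    rw [this]
    exact (e₁ ⟨x, hx⟩).2
  · rw [Finset.card_image_of_injective _ (Equiv.injective _), h]

lemma perm_sum_prod {k m : ℕ} (u : Fin k → ℝ) (S : Finset (Fin k)) (hS : S.card = m) :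
    (∑ σ : Equiv.Perm (Fin k), ∏ j ∈ S, u (σ j)) * (k.choose m : ℝ) =
      (k.factorial : ℝ) * ∑ T ∈ Finset.univ.powersetCard m, ∏ j ∈ T, u j := by
  classical
  have key : ∀ S' : Finset (Fin k), S'.card = m →
      (∑ σ : Equiv.Perm (Fin k), ∏ j ∈ S', u (σ j)) =
        ∑ σ : Equiv.Perm (Fin k), ∏ j ∈ S, u (σ j) := by
    intro S' hS'
    obtain ⟨τ, hτ⟩ := exists_perm_image (h := hS.trans hS'.symm)
    calc ∑ σ : Equiv.Perm (Fin k), ∏ j ∈ S', u (σ j)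
        = ∑ σ : Equiv.Perm (Fin k), ∏ j ∈ S.image τ, u (σ j) := by rw [hτ]
      _ = ∑ σ : Equiv.Perm (Fin k), ∏ j ∈ S, u (σ (τ j)) := by
          refine Finset.sum_congr rfl fun σ _ => ?_
          rw [Finset.prod_image (fun x _ y _ hxy => τ.injective hxy)]
      _ = ∑ σ : Equiv.Perm (Fin k), ∏ j ∈ S, u (σ j) := by
          refine Fintype.sum_equiv (Equiv.mulRight τ) _ _ fun σ => ?_
          refine Finset.prod_congr rfl fun j _ => ?_
          simp [Equiv.Perm.mul_apply]
  have stepB : ∑ T ∈ Finset.univ.powersetCard m,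
      (∑ σ : Equiv.Perm (Fin k), ∏ j ∈ T, u (σ j)) =
      (k.factorial : ℝ) * ∑ T ∈ Finset.univ.powersetCard m, ∏ j ∈ T, u j := by
    rw [Finset.sum_comm]
    have h1 : ∀ σ : Equiv.Perm (Fin k),
        ∑ T ∈ Finset.univ.powersetCard m, ∏ j ∈ T, u (σ j) =
          ∑ T ∈ Finset.univ.powersetCard m, ∏ j ∈ T, u j := by
      intro σ
      refine Finset.sum_nbij' (fun T => T.image σ) (fun T => T.image σ.symm) ?_ ?_ ?_ ?_ ?_
      · intro T hT
        rw [Finset.mem_powersetCard_univ] at hT ⊢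
        rw [Finset.card_image_of_injective _ σ.injective, hT]
      · intro T hT
        rw [Finset.mem_powersetCard_univ] at hT ⊢
        rw [Finset.card_image_of_injective _ σ.symm.injective, hT]
      · intro T _
        simp [Finset.image_image, Function.comp]
      · intro T _
        simp [Finset.image_image, Function.comp]
      · intro T _
        rw [Finset.prod_image (fun x _ y _ hxy => σ.injective hxy)]
    rw [Finset.sum_congr rfl fun σ _ => h1 σ, Finset.sum_const, Finset.card_univ,
      Fintype.card_perm, Fintype.card_fin, nsmul_eq_mul]
  have hcard : (Finset.univ.powersetCard m : Finset (Finset (Fin k))).card = k.choose m := by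
    rw [Finset.card_powersetCard, Finset.card_univ, Fintype.card_fin]
  calc (∑ σ : Equiv.Perm (Fin k), ∏ j ∈ S, u (σ j)) * (k.choose m : ℝ)
      = ∑ T ∈ Finset.univ.powersetCard m, (∑ σ : Equiv.Perm (Fin k), ∏ j ∈ T, u (σ j)) := by
        rw [Finset.sum_congr rfl fun T hT =>
          key T (Finset.mem_powersetCard_univ.1 hT), Finset.sum_const, hcard, nsmul_eq_mul]
        ring
    _ = _ := stepB

lemma cast_factorial_choose {r k : ℕ} (h1 : 1 ≤ r) (hkr : r ≤ k) :
    ((r.factorial : ℝ) * (k.choose r : ℝ)) =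
      (k : ℝ) * ∏ i ∈ Finset.Icc 1 (r-1), ((k:ℝ) - (i:ℝ)) := by
  have hnat : r.factorial * k.choose r = k.descFactorial r :=
    (Nat.descFactorial_eq_factorial_mul_choose k r).symm
  have hcast : ((r.factorial : ℝ) * (k.choose r : ℝ)) = ((k.descFactorial r : ℕ) : ℝ) := by
    rw [← Nat.cast_mul, hnat]
  rw [hcast, Nat.descFactorial_eq_prod_range, Nat.cast_prod]
  have hterm : ∀ i ∈ Finset.range r, ((k - i : ℕ) : ℝ) = (k:ℝ) - (i:ℝ) := by
    intro i hi
    exact Nat.cast_sub (le_of_lt (lt_of_lt_of_le (Finset.mem_range.1 hi) hkr))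
  rw [Finset.prod_congr rfl hterm]
  have hr : r = (r - 1) + 1 := (Nat.succ_pred_eq_of_pos h1).symm
  rw [hr, Finset.prod_range_succ', Nat.add_sub_cancel]
  have : ∏ i ∈ Finset.Icc 1 (r-1), ((k:ℝ) - (i:ℝ)) =
      ∏ i ∈ Finset.range (r-1), ((k:ℝ) - ((i+1 : ℕ) : ℝ)) := by
    rw [← Finset.Ico_add_one_right_eq_Icc, Finset.prod_Ico_eq_prod_range]
    refine Finset.prod_congr (by norm_num) fun i _ => by rw [add_comm 1 i]
  rw [this]
  push_cast
  ring

lemma key_ineq {r k n : ℕ} {p : ℝ} (hr2 : 2 ≤ r) (hkr : r ≤ k) (hp : (r : ℝ) ≤ p)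
    (E : Finset (Finset (Fin n))) (w : Finset (Fin n) → ℝ)
    (hunif : ∀ e ∈ E, e.card = r) (η : Fin n → Fin k)
    (hη : ∀ e ∈ E, Set.InjOn η (e : Set (Fin n)))
    (hbdd : BddBelow {t | ∃ x : Fin n → ℝ, lpNorm p x = 1 ∧ polyForm r E w x = t})
    (hL0 : sInf {t | ∃ x : Fin n → ℝ, lpNorm p x = 1 ∧ polyForm r E w x = t} ≤ 0)
    (x : Fin n → ℝ) (hx : lpNorm p x = 1) (u : Fin k → ℝ) (hu : lpNorm p u = 1) :
    (k : ℝ) ^ (1 - (r : ℝ) / p) * (∏ i ∈ Finset.Icc 1 (r - 1), ((k : ℝ) - (i : ℝ))) *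
        sInf {t | ∃ x : Fin n → ℝ, lpNorm p x = 1 ∧ polyForm r E w x = t} ≤
      polyForm r E w x * polyForm r (completeEdges r k) (fun _ => 1) u := by
  classical
  have hrpos : 0 < r := by omega
  have hrne : (r : ℝ) ≠ 0 := by positivity
  have hp0 : (0 : ℝ) < p := lt_of_lt_of_le (by exact_mod_cast hrpos) hp
  have hk0 : 0 < k := by omega
  have hkR : (0 : ℝ) < k := by exact_mod_cast hk0
  have hfacpos : (0 : ℝ) < (k.factorial : ℝ) := by exact_mod_cast k.factorial_pos
  have hchoosepos : (0 : ℝ) < (k.choose r : ℝ) := by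
    exact_mod_cast Nat.choose_pos hkr
  set G := {t | ∃ x : Fin n → ℝ, lpNorm p x = 1 ∧ polyForm r E w x = t} with hG
  set L := sInf G with hL
  set z : Equiv.Perm (Fin k) → Fin n → ℝ := fun σ i => x i * u (σ (η i)) with hz
  set N : Equiv.Perm (Fin k) → ℝ := fun σ => lpNorm p (z σ) with hN
  set Q : ℝ := ∑ T ∈ Finset.univ.powersetCard r, ∏ j ∈ T, u j with hQ
  -- step 1
  have step1 : ∀ σ : Equiv.Perm (Fin k), L * N σ ^ r ≤ polyForm r E w (z σ) := by
    intro σ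
    by_cases h0 : N σ = 0
    · have hzz : ∀ i, z σ i = 0 := lpNorm_eq_zero hp0 h0
      have hP : polyForm r E w (z σ) = 0 := by
        unfold polyForm
        rw [Finset.sum_eq_zero, mul_zero]
        intro e he
        obtain ⟨i, hi⟩ := Finset.card_pos.1 (by rw [hunif e he]; omega)
        rw [Finset.prod_eq_zero hi (hzz i), mul_zero]
      rw [h0, hP, zero_pow (by omega), mul_zero]
    · have hNpos : 0 < N σ := lt_of_le_of_ne (lpNorm_nonneg p (z σ)) (Ne.symm h0)
      have hy : lpNorm p (fun i => (N σ)⁻¹ * z σ i) = 1 := by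
        rw [lpNorm_smul hp0 (inv_nonneg.2 hNpos.le), inv_mul_cancel₀ h0]
      have h1 : L ≤ (N σ)⁻¹ ^ r * polyForm r E w (z σ) := by
        have hmem : (N σ)⁻¹ ^ r * polyForm r E w (z σ) ∈ G := by
          refine ⟨fun i => (N σ)⁻¹ * z σ i, hy, ?_⟩
          rw [polyForm_smul r E w hunif]
        exact csInf_le hbdd hmem
      calc L * N σ ^ r ≤ ((N σ)⁻¹ ^ r * polyForm r E w (z σ)) * N σ ^ r :=
            mul_le_mul_of_nonneg_right h1 (by positivity)
        _ = polyForm r E w (z σ) := by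
            rw [inv_pow, mul_comm _ (polyForm r E w (z σ)), mul_assoc,
              inv_mul_cancel₀ (pow_ne_zero _ h0), mul_one]
  -- step 2
  have hedge : ∀ e ∈ E, ∀ σ : Equiv.Perm (Fin k),
      ∏ i ∈ e, z σ i = (∏ i ∈ e, x i) * ∏ j ∈ e.image η, u (σ j) := by
    intro e he σ
    rw [Finset.prod_image (fun a ha b hb hab => hη e he ha hb hab),
      ← Finset.prod_mul_distrib]
  have hcardim : ∀ e ∈ E, (e.image η).card = r := by
    intro e he
    rw [Finset.card_image_of_injOn (hη e he), hunif e he]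
  have hsum_e : ∀ e ∈ E,
      (∑ σ : Equiv.Perm (Fin k), ∏ i ∈ e, z σ i) * (k.choose r : ℝ)
        = (∏ i ∈ e, x i) * ((k.factorial : ℝ) * Q) := by
    intro e he
    rw [Finset.sum_congr rfl fun σ _ => hedge e he σ, ← Finset.mul_sum, mul_assoc,
      perm_sum_prod u (e.image η) (hcardim e he)]
  have step2 : (∑ σ : Equiv.Perm (Fin k), polyForm r E w (z σ)) * (k.choose r : ℝ)
      = (k.factorial : ℝ) * Q * polyForm r E w x := by
    have e1 : ∑ σ : Equiv.Perm (Fin k), polyForm r E w (z σ)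
        = (r.factorial : ℝ) * ∑ e ∈ E, w e * ∑ σ : Equiv.Perm (Fin k), ∏ i ∈ e, z σ i := by
      unfold polyForm
      rw [← Finset.mul_sum, Finset.sum_comm]
      congr 1
      exact Finset.sum_congr rfl fun e _ => (Finset.mul_sum _ _ _).symm
    rw [e1, mul_assoc, Finset.sum_mul]
    have e2 : ∑ e ∈ E, (w e * ∑ σ : Equiv.Perm (Fin k), ∏ i ∈ e, z σ i) * (k.choose r : ℝ)
        = ((k.factorial : ℝ) * Q) * ∑ e ∈ E, w e * ∏ i ∈ e, x i := by
      rw [Finset.mul_sum]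
      refine Finset.sum_congr rfl fun e he => ?_
      rw [mul_assoc, hsum_e e he]
      ring
    rw [e2]
    unfold polyForm
    ring
  -- step 3 : k * ∑ N^p = k!
  have husum : ∑ j, |u j| ^ p = 1 := by
    rw [← lpNorm_rpow hp0, hu, Real.one_rpow]
  have hxsum : ∑ i, |x i| ^ p = 1 := by
    rw [← lpNorm_rpow hp0, hx, Real.one_rpow]
  have heval : ∀ j₀ : Fin k,
      (∑ σ : Equiv.Perm (Fin k), |u (σ j₀)| ^ p) * (k : ℝ) = (k.factorial : ℝ) := by
    intro j₀
    have h := perm_sum_prod (fun j => |u j| ^ p) {j₀} (Finset.card_singleton j₀)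
    simp only [Finset.prod_singleton] at h
    rw [Nat.choose_one_right] at h
    rw [h, Finset.powersetCard_one]
    rw [Finset.sum_map]
    simp only [Function.Embedding.coeFn_mk, Finset.prod_singleton]
    rw [husum, mul_one]
  have step3 : (∑ σ : Equiv.Perm (Fin k), N σ ^ p) * (k : ℝ) = (k.factorial : ℝ) := by
    have hNp : ∀ σ : Equiv.Perm (Fin k), N σ ^ p = ∑ i, |x i| ^ p * |u (σ (η i))| ^ p := by
      intro σ
      rw [hN]
      rw [lpNorm_rpow hp0]
      exact Finset.sum_congr rfl fun i _ => by
        rw [hz]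
        rw [abs_mul, Real.mul_rpow (abs_nonneg _) (abs_nonneg _)]
    calc (∑ σ : Equiv.Perm (Fin k), N σ ^ p) * (k : ℝ)
        = ∑ i, |x i| ^ p * ((∑ σ : Equiv.Perm (Fin k), |u (σ (η i))| ^ p) * (k : ℝ)) := by
          rw [Finset.sum_congr rfl fun σ _ => hNp σ, Finset.sum_comm, Finset.sum_mul]
          exact Finset.sum_congr rfl fun i _ => by
            rw [← Finset.mul_sum]
            ring
      _ = ∑ i, |x i| ^ p * (k.factorial : ℝ) := by
          exact Finset.sum_congr rfl fun i _ => by rw [heval (η i)]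
      _ = (k.factorial : ℝ) := by rw [← Finset.sum_mul, hxsum, one_mul]
  -- step 4 : Jensen
  have hkfne : (k.factorial : ℝ) ≠ 0 := ne_of_gt hfacpos
  have step4 : ∑ σ : Equiv.Perm (Fin k), N σ ^ r
      ≤ (k.factorial : ℝ) * (k : ℝ) ^ (-((r : ℝ) / p)) := by
    have hq1 : 1 ≤ p / (r : ℝ) := (one_le_div (by positivity)).2 hp
    have hmean := Real.arith_mean_le_rpow_mean (Finset.univ : Finset (Equiv.Perm (Fin k)))
      (fun _ => (k.factorial : ℝ)⁻¹) (fun σ => N σ ^ (r : ℝ))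
      (fun _ _ => by positivity)
      (by
        rw [Finset.sum_const, Finset.card_univ, Fintype.card_perm, Fintype.card_fin,
          nsmul_eq_mul]
        exact mul_inv_cancel₀ hkfne)
      (fun σ _ => Real.rpow_nonneg (lpNorm_nonneg p _) _) hq1
    have hzq : ∀ σ : Equiv.Perm (Fin k), (N σ ^ (r : ℝ)) ^ (p / (r : ℝ)) = N σ ^ p := by
      intro σ
      rw [← Real.rpow_mul (lpNorm_nonneg p _)]
      congr 1
      field_simp
    have hsum1 : ∑ σ : Equiv.Perm (Fin k), (k.factorial : ℝ)⁻¹ * (N σ ^ (r : ℝ)) ^ (p / (r : ℝ))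
        = ((k : ℝ))⁻¹ := by
      rw [Finset.sum_congr rfl fun σ _ => by rw [hzq σ], ← Finset.mul_sum]
      have : ∑ σ : Equiv.Perm (Fin k), N σ ^ p = (k.factorial : ℝ) / (k : ℝ) := by
        rw [eq_div_iff (ne_of_gt hkR)]
        exact step3
      rw [this]
      field_simp
    rw [hsum1] at hmean
    have hexp : (1 : ℝ) / (p / (r : ℝ)) = (r : ℝ) / p := by
      rw [one_div, inv_div]
    rw [hexp] at hmean
    have hinv : ((k : ℝ)⁻¹) ^ ((r : ℝ) / p) = (k : ℝ) ^ (-((r : ℝ) / p)) := by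
      rw [← Real.rpow_neg_one (k : ℝ), ← Real.rpow_mul (le_of_lt hkR)]
      congr 1
      ring
    rw [hinv] at hmean
    have hmean2 : (k.factorial : ℝ)⁻¹ * ∑ σ : Equiv.Perm (Fin k), N σ ^ (r : ℝ)
        ≤ (k : ℝ) ^ (-((r : ℝ) / p)) := by
      rw [Finset.mul_sum]
      exact hmean
    have hfinal := mul_le_mul_of_nonneg_left hmean2 (le_of_lt hfacpos)
    rw [← mul_assoc, mul_inv_cancel₀ hkfne, one_mul] at hfinal
    calc ∑ σ : Equiv.Perm (Fin k), N σ ^ r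
        = ∑ σ : Equiv.Perm (Fin k), N σ ^ (r : ℝ) :=
          Finset.sum_congr rfl fun σ _ => (Real.rpow_natCast _ r).symm
      _ ≤ _ := hfinal
  -- combine
  have comb1 : L * ((k.factorial : ℝ) * (k : ℝ) ^ (-((r : ℝ) / p)))
      ≤ ∑ σ : Equiv.Perm (Fin k), polyForm r E w (z σ) := by
    calc L * ((k.factorial : ℝ) * (k : ℝ) ^ (-((r : ℝ) / p)))
        ≤ L * ∑ σ : Equiv.Perm (Fin k), N σ ^ r :=
          mul_le_mul_of_nonpos_left step4 hL0
      _ = ∑ σ : Equiv.Perm (Fin k), L * N σ ^ r := Finset.mul_sum _ _ _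
      _ ≤ ∑ σ : Equiv.Perm (Fin k), polyForm r E w (z σ) :=
          Finset.sum_le_sum fun σ _ => step1 σ
  have comb2 : L * ((k.factorial : ℝ) * (k : ℝ) ^ (-((r : ℝ) / p))) * (k.choose r : ℝ)
      ≤ (k.factorial : ℝ) * Q * polyForm r E w x := by
    rw [← step2]
    exact mul_le_mul_of_nonneg_right comb1 (le_of_lt hchoosepos)
  -- divide by k!
  have comb3 : L * (k : ℝ) ^ (-((r : ℝ) / p)) * (k.choose r : ℝ) ≤ Q * polyForm r E w x := by
    refine le_of_mul_le_mul_left ?_ hfacpos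
    calc (k.factorial : ℝ) * (L * (k : ℝ) ^ (-((r : ℝ) / p)) * (k.choose r : ℝ))
          = L * ((k.factorial : ℝ) * (k : ℝ) ^ (-((r : ℝ) / p))) * (k.choose r : ℝ) := by ring
        _ ≤ (k.factorial : ℝ) * Q * polyForm r E w x := comb2
        _ = (k.factorial : ℝ) * (Q * polyForm r E w x) := by ring
  -- multiply by r!
  have hrfacpos : (0 : ℝ) < (r.factorial : ℝ) := by exact_mod_cast r.factorial_pos
  have comb4 : L * (k : ℝ) ^ (-((r : ℝ) / p)) * ((r.factorial : ℝ) * (k.choose r : ℝ))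
      ≤ polyForm r E w x * ((r.factorial : ℝ) * Q) := by
    have := mul_le_mul_of_nonneg_left comb3 (le_of_lt hrfacpos)
    calc L * (k : ℝ) ^ (-((r : ℝ) / p)) * ((r.factorial : ℝ) * (k.choose r : ℝ))
        = (r.factorial : ℝ) * (L * (k : ℝ) ^ (-((r : ℝ) / p)) * (k.choose r : ℝ)) := by ring
      _ ≤ (r.factorial : ℝ) * (Q * polyForm r E w x) := this
      _ = polyForm r E w x * ((r.factorial : ℝ) * Q) := by ring
  have hPK : polyForm r (completeEdges r k) (fun _ => 1) u = (r.factorial : ℝ) * Q := by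
    unfold polyForm completeEdges
    rw [hQ]
    congr 1
    exact Finset.sum_congr rfl fun T _ => one_mul _
  have hCoef : (k : ℝ) ^ (-((r : ℝ) / p)) * ((r.factorial : ℝ) * (k.choose r : ℝ))
      = (k : ℝ) ^ (1 - (r : ℝ) / p) * ∏ i ∈ Finset.Icc 1 (r - 1), ((k : ℝ) - (i : ℝ)) := by
    rw [cast_factorial_choose (by omega) hkr, ← mul_assoc]
    congr 1
    have h1 : (k : ℝ) ^ (1 - (r : ℝ) / p) = (k : ℝ) ^ (-((r : ℝ) / p)) * (k : ℝ) ^ (1:ℝ) := by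
      rw [← Real.rpow_add hkR]
      congr 1
      ring
    rw [h1, Real.rpow_one]
  calc (k : ℝ) ^ (1 - (r : ℝ) / p) * (∏ i ∈ Finset.Icc 1 (r - 1), ((k : ℝ) - (i : ℝ))) * L
      = L * (k : ℝ) ^ (-((r : ℝ) / p)) * ((r.factorial : ℝ) * (k.choose r : ℝ)) := by
        rw [← hCoef]; ring
    _ ≤ polyForm r E w x * ((r.factorial : ℝ) * Q) := comb4
    _ = polyForm r E w x * polyForm r (completeEdges r k) (fun _ => 1) u := by rw [hPK]

section AuxMain
variable {V : Type*} [Fintype V] {p : ℝ}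

lemma zero_mem_sphere_set [Nonempty V] (hp : 0 < p) (r : ℕ) (E : Finset (Finset V))
    (w : Finset V → ℝ) (hcard : ∀ e ∈ E, 2 ≤ e.card) :
    (0 : ℝ) ∈ {t | ∃ x : V → ℝ, lpNorm p x = 1 ∧ polyForm r E w x = t} := by
  classical
  obtain ⟨v⟩ := ‹Nonempty V›
  refine ⟨fun i => if i = v then 1 else 0, ?_, ?_⟩
  · unfold lpNorm
    have h : ∀ i : V, |if i = v then (1:ℝ) else 0| ^ p = if i = v then 1 else 0 := by
      intro i
      by_cases hi : i = v <;> simp [hi, Real.zero_rpow hp.ne']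
    rw [Finset.sum_congr rfl fun i _ => h i, Finset.sum_ite_eq' univ v (fun _ => (1:ℝ))]
    simp [Real.one_rpow]
  · unfold polyForm
    rw [Finset.sum_eq_zero, mul_zero]
    intro e he
    obtain ⟨j, hj, hjv⟩ := Finset.exists_mem_ne (s := e)
      (by have := hcard e he; omega) v
    rw [Finset.prod_eq_zero hj (show (if j = v then (1:ℝ) else 0) = 0 from if_neg hjv),
      mul_zero]

lemma abs_le_one_of_lpNorm (hp : 0 < p) {x : V → ℝ} (hx : lpNorm p x = 1) (i : V) :
    |x i| ≤ 1 := by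
  have hs : ∑ j, |x j| ^ p = 1 := by rw [← lpNorm_rpow hp, hx, Real.one_rpow]
  have h1 : |x i| ^ p ≤ 1 := by
    rw [← hs]
    exact Finset.single_le_sum (fun j _ => Real.rpow_nonneg (abs_nonneg _) _) (mem_univ i)
  by_contra hgt
  push_neg at hgt
  exact absurd h1 (not_le.2 ((Real.one_lt_rpow_iff_of_pos
    (lt_trans one_pos hgt)).2 (Or.inl ⟨hgt, hp⟩)))

lemma bddBelow_sphere_set (hp : 0 < p) (r : ℕ) (E : Finset (Finset V))
    (w : Finset V → ℝ) :
    BddBelow {t | ∃ x : V → ℝ, lpNorm p x = 1 ∧ polyForm r E w x = t} := by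
  refine ⟨-((r.factorial : ℝ) * ∑ e ∈ E, |w e|), ?_⟩
  rintro t ⟨x, hx, rfl⟩
  have habs : |polyForm r E w x| ≤ (r.factorial : ℝ) * ∑ e ∈ E, |w e| := by
    unfold polyForm
    rw [abs_mul, Nat.abs_cast]
    refine mul_le_mul_of_nonneg_left ?_ (by positivity)
    calc |∑ e ∈ E, w e * ∏ i ∈ e, x i| ≤ ∑ e ∈ E, |w e * ∏ i ∈ e, x i| :=
          Finset.abs_sum_le_sum_abs _ _
      _ ≤ ∑ e ∈ E, |w e| := by
          refine Finset.sum_le_sum fun e _ => ?_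
          rw [abs_mul]
          refine mul_le_of_le_one_right (abs_nonneg _) ?_
          rw [Finset.abs_prod]
          exact Finset.prod_le_one (fun i _ => abs_nonneg _)
            (fun i _ => abs_le_one_of_lpNorm hp hx i)
  exact (abs_le.1 habs).1

end AuxMain

/-- Inequality (8) of the paper: for a weighted `k`-partite `r`-graph `G_w` with at
least one edge of nonzero weight, `r ≥ 2` even, `k ≥ r`, `p ≥ r`:
`λ^(p)(G_w) · λ_min^(p)(K_k^r) ≥ k^{1-r/p} (k-1)⋯(k-r+1) · λ_min^(p)(G_w)`. -/
theorem lamMax_mul_lamMin_complete_ge (r k n : ℕ) (p : ℝ)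
    (hr2 : 2 ≤ r) (hre : Even r) (hkr : r ≤ k) (hp : (r : ℝ) ≤ p)
    (E : Finset (Finset (Fin n))) (w : Finset (Fin n) → ℝ)
    (hunif : ∀ e ∈ E, e.card = r)
    (hpart : ∃ η : Fin n → Fin k, ∀ e ∈ E, Set.InjOn η (e : Set (Fin n)))
    (hw : ∃ e ∈ E, w e ≠ 0) :
    lamMax r p E w * lamMin r p (completeEdges r k) (fun _ => 1) ≥
      (k : ℝ) ^ (1 - (r : ℝ) / p) * (∏ i ∈ Finset.Icc 1 (r - 1), ((k : ℝ) - (i : ℝ))) *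
        lamMin r p E w := by
  classical
  obtain ⟨η, hη⟩ := hpart
  obtain ⟨e₀, he₀, -⟩ := hw
  have hk0 : 0 < k := by omega
  have hp0 : (0 : ℝ) < p :=
    lt_of_lt_of_le (by exact_mod_cast (show 0 < r by omega)) hp
  have hn : Nonempty (Fin n) := by
    obtain ⟨i, -⟩ := Finset.card_pos.1 (show 0 < e₀.card by rw [hunif e₀ he₀]; omega)
    exact ⟨i⟩
  have hkn : Nonempty (Fin k) := ⟨⟨0, hk0⟩⟩
  have hGcard : ∀ e ∈ E, 2 ≤ e.card := fun e he => by rw [hunif e he]; exact hr2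
  have hKcard : ∀ T ∈ completeEdges r k, 2 ≤ T.card := fun T hT => by
    rw [Finset.mem_powersetCard_univ.1 hT]; exact hr2
  set G := {t | ∃ x : Fin n → ℝ, lpNorm p x = 1 ∧ polyForm r E w x = t} with hGdef
  set K := {t | ∃ u : Fin k → ℝ, lpNorm p u = 1 ∧
    polyForm r (completeEdges r k) (fun _ => 1) u = t} with hKdef
  have hmaxG : lamMax r p E w = sSup G := rfl
  have hminG : lamMin r p E w = sInf G := rfl
  have hminK : lamMin r p (completeEdges r k) (fun _ => 1) = sInf K := rfl
  have hG0 : (0 : ℝ) ∈ G := zero_mem_sphere_set hp0 r E w hGcard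
  have hK0 : (0 : ℝ) ∈ K := zero_mem_sphere_set hp0 r _ _ hKcard
  have hGbdd : BddBelow G := bddBelow_sphere_set hp0 r E w
  have hKbdd : BddBelow K := bddBelow_sphere_set hp0 r _ _
  have hL0 : sInf G ≤ 0 := csInf_le hGbdd hG0
  have hM0 : sInf K ≤ 0 := csInf_le hKbdd hK0
  have hKne : K.Nonempty := ⟨0, hK0⟩
  set C : ℝ := (k : ℝ) ^ (1 - (r : ℝ) / p) *
    ∏ i ∈ Finset.Icc 1 (r - 1), ((k : ℝ) - (i : ℝ)) with hCdef
  have hCpos : 0 < C := by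
    refine mul_pos (Real.rpow_pos_of_pos (by exact_mod_cast hk0) _) ?_
    refine Finset.prod_pos fun i hi => ?_
    have h1 : i ≤ r - 1 := (Finset.mem_Icc.1 hi).2
    have h2 : i < k := by omega
    have : (i : ℝ) < (k : ℝ) := by exact_mod_cast h2
    linarith
  -- key inequality for members
  have key : ∀ t ∈ G, ∀ s ∈ K, C * sInf G ≤ t * s := by
    rintro t ⟨x, hx, rfl⟩ s ⟨u, hu, rfl⟩
    exact key_ineq hr2 hkr hp E w hunif η hη hGbdd hL0 x hx u hu
  have main2 : ∀ t ∈ G, 0 < t → C * sInf G ≤ t * sInf K := by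
    intro t ht htpos
    have h1 : C * sInf G / t ≤ sInf K := by
      refine le_csInf hKne fun s hs => ?_
      rw [div_le_iff₀ htpos]
      calc C * sInf G ≤ t * s := key t ht s hs
        _ = s * t := mul_comm _ _
    calc C * sInf G = t * (C * sInf G / t) := by field_simp
      _ ≤ t * sInf K := mul_le_mul_of_nonneg_left h1 htpos.le
  rw [ge_iff_le, hmaxG, hminG, hminK]
  rcases eq_or_lt_of_le hM0 with heq | hlt
  · rw [heq, mul_zero]
    exact mul_nonpos_of_nonneg_of_nonpos hCpos.le hL0
  · set B := C * sInf G / sInf K with hBdef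
    have hB0 : 0 ≤ B := by
      rw [hBdef, le_div_iff_of_neg hlt, zero_mul]
      exact mul_nonpos_of_nonneg_of_nonpos hCpos.le hL0
    have hsup : sSup G ≤ B := by
      refine Real.sSup_le (fun t ht => ?_) hB0
      rcases le_or_gt t 0 with h | h
      · exact h.trans hB0
      · rw [hBdef, le_div_iff_of_neg hlt]
        exact main2 t ht h
    calc C * sInf G = B * sInf K := by
          rw [hBdef, div_mul_cancel₀ _ (ne_of_lt hlt)]
      _ ≤ sSup G * sInf K := mul_le_mul_of_nonpos_right hsup hlt.le
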